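/- Let γ : Ω → ℝ be three times continuously differentiable with γ > 0 on Ω, let a > 0, b > 0 be constants and 0 ≤ σ ≤ 1, and assume the identity a·‖∇γ‖² + b·γ·Δγ = γ^σ holds at every point of Ω. If the function ψ := ‖∇γ‖² attains a local maximum at an interior point x₀ ∈ Ω, then a·‖∇γ(x₀)‖² ≤ γ(x₀)^σ. (Interior maximum-principle bound (25-5-11)–(25-5-12) used in the proof of Proposition 5.1.) -/

import Mathlib

open Filter ContinuousLinearMap

set_option maxHeartbeats 1000000

/-- Three-dimensional Euclidean space. -/
abbrev E3 : Type := EuclideanSpace ℝ (Fin 3)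

/-- The Laplacian of a function on `ℝ³`: the trace of its second derivative,
i.e. the sum of its pure second partial derivatives. -/
noncomputable def lap (u : E3 → ℝ) (x : E3) : ℝ :=
  ∑ i : Fin 3,
    fderiv ℝ (fderiv ℝ u) x (EuclideanSpace.single i 1) (EuclideanSpace.single i 1)

lemma second_deriv_test_aux {φ h : ℝ → ℝ} {c : ℝ}
    (hφ : ∀ᶠ t in nhds (0:ℝ), HasDerivAt φ (h t) t)
    (hh : HasDerivAt h c 0) (h0 : h 0 = 0)
    (hmax : ∀ᶠ t in nhds (0:ℝ), φ t ≤ φ 0) : c ≤ 0 := by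
  by_contra hc
  push_neg at hc
  have hslope := hasDerivAt_iff_tendsto_slope.1 hh
  have hpos : ∀ᶠ t in nhdsWithin (0:ℝ) {(0:ℝ)}ᶜ, 0 < slope h 0 t :=
    hslope.eventually (eventually_gt_nhds hc)
  rw [eventually_nhdsWithin_iff] at hpos
  obtain ⟨ε, hε, hball⟩ := Metric.eventually_nhds_iff.1 (hpos.and (hφ.and hmax))
  set δ := ε / 2 with hδ
  have hδpos : 0 < δ := by positivity
  have hmem : ∀ t : ℝ, t ∈ Set.Icc 0 δ → dist t (0:ℝ) < ε := by
    intro t ht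
    rw [Real.dist_eq, sub_zero]
    have := abs_le.2 ⟨le_trans (by linarith) ht.1, le_trans ht.2 (le_refl δ)⟩
    calc |t| ≤ δ := this
      _ < ε := by rw [hδ]; linarith
  have hHpos : ∀ t : ℝ, t ∈ Set.Ioo 0 δ → 0 < h t := by
    intro t ht
    have hdist : dist t (0:ℝ) < ε := by
      rw [Real.dist_eq, sub_zero, abs_of_pos ht.1]; linarith [ht.2]
    have h1 := (hball hdist).1
    have h2 : 0 < slope h 0 t := h1 (by simp [ne_of_gt ht.1])
    rw [slope_def_field, h0] at h2
    have : 0 < (h t) / t := by simpa [div_eq_mul_inv] using h2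
    exact (div_pos_iff.1 this).resolve_right (fun ⟨_, ht'⟩ => absurd ht.1 (not_lt.2 ht'.le)) |>.1
  have hderiv : ∀ t ∈ Set.Icc (0:ℝ) δ, HasDerivAt φ (h t) t := by
    intro t ht
    exact ((hball (hmem t ht)).2).1
  have hmono : StrictMonoOn φ (Set.Icc 0 δ) := by
    apply strictMonoOn_of_deriv_pos (convex_Icc 0 δ)
    · exact fun t ht => (hderiv t ht).continuousAt.continuousWithinAt
    · intro t ht
      rw [interior_Icc] at ht
      rw [(hderiv t (Set.mem_Icc.2 ⟨ht.1.le, ht.2.le⟩)).deriv]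
      exact hHpos t ht
  have hlt : φ 0 < φ δ :=
    hmono (Set.left_mem_Icc.2 hδpos.le) (Set.right_mem_Icc.2 hδpos.le) hδpos
  have hle : φ δ ≤ φ 0 := ((hball (hmem δ (Set.right_mem_Icc.2 hδpos.le))).2).2
  linarith


/-- Interior maximum-principle bound ((25-5-11)–(25-5-12) in the proof of
Proposition 5.1): if `γ > 0` is `C³` on an open set `Ω ⊆ ℝ³`, `a, b > 0`,
`0 ≤ σ ≤ 1`, the identity `a·‖∇γ‖² + b·γ·Δγ = γ^σ` holds on `Ω`, and
`ψ = ‖∇γ‖²` attains a local maximum (within `Ω`) at `x₀ ∈ Ω`, then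
`a·‖∇γ(x₀)‖² ≤ γ(x₀)^σ`. -/
theorem interior_max_gradient_bound (Ω : Set E3) (hΩ : IsOpen Ω)
    (γ : E3 → ℝ) (hγ : ContDiffOn ℝ 3 γ Ω) (hpos : ∀ x ∈ Ω, 0 < γ x)
    (a b σ : ℝ) (ha : 0 < a) (hb : 0 < b) (hσ0 : 0 ≤ σ) (hσ1 : σ ≤ 1)
    (hid : ∀ x ∈ Ω, a * ‖gradient γ x‖ ^ 2 + b * γ x * lap γ x = γ x ^ σ)
    (x₀ : E3) (hx₀ : x₀ ∈ Ω)
    (hmax : IsLocalMaxOn (fun x => ‖gradient γ x‖ ^ 2) Ω x₀) :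
    a * ‖gradient γ x₀‖ ^ 2 ≤ γ x₀ ^ σ := by
  set e : Fin 3 → E3 := fun i => EuclideanSpace.single i 1 with he
  set g : Fin 3 → E3 → ℝ := fun i x => fderiv ℝ γ x (e i) with hg
  set H : E3 → E3 →L[ℝ] E3 →L[ℝ] ℝ := fun x => fderiv ℝ (fderiv ℝ γ) x with hH
  have hΩnhds : Ω ∈ nhds x₀ := hΩ.mem_nhds hx₀
  have hA : ∀ x ∈ Ω, ContDiffAt ℝ 3 γ x := fun x hx => hγ.contDiffAt (hΩ.mem_nhds hx)
  have hd1 : ∀ x ∈ Ω, DifferentiableAt ℝ γ x :=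
    fun x hx => (hA x hx).differentiableAt (by norm_num)
  have hfd2 : ∀ x ∈ Ω, ContDiffAt ℝ 2 (fderiv ℝ γ) x :=
    fun x hx => (hA x hx).fderiv_right (by norm_num)
  have hd2 : ∀ x ∈ Ω, DifferentiableAt ℝ (fderiv ℝ γ) x :=
    fun x hx => (hfd2 x hx).differentiableAt (by norm_num)
  have hsymH : ∀ x ∈ Ω, ∀ u v, H x u v = H x v u :=
    fun x hx u v => (hA x hx).isSymmSndFDerivAt (by norm_num) u v
  have hg' : ∀ i, ∀ x ∈ Ω,
      HasFDerivAt (g i) ((ContinuousLinearMap.apply ℝ ℝ (e i)).comp (H x)) x :=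
    fun i x hx => (ContinuousLinearMap.apply ℝ ℝ (e i)).hasFDerivAt.comp x ((hd2 x hx).hasFDerivAt)
  have hgC2 : ∀ i, ∀ x ∈ Ω, ContDiffAt ℝ 2 (g i) x :=
    fun i x hx => (ContinuousLinearMap.apply ℝ ℝ (e i)).contDiff.comp_contDiffAt x (hfd2 x hx)
  set B : Fin 3 → E3 →L[ℝ] E3 →L[ℝ] ℝ := fun i => fderiv ℝ (fderiv ℝ (g i)) x₀ with hB
  have hB' : ∀ i, HasFDerivAt (fderiv ℝ (g i)) (B i) x₀ := by
    intro i
    exact (((hgC2 i x₀ hx₀).fderiv_right (m := 1) (by norm_num)).differentiableAt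
      (by norm_num)).hasFDerivAt
  have hsymB : ∀ i u v, B i u v = B i v u :=
    fun i u v => (hgC2 i x₀ hx₀).isSymmSndFDerivAt (by norm_num) u v
  have hgH : ∀ i, ∀ x ∈ Ω, fderiv ℝ (g i) x = (ContinuousLinearMap.apply ℝ ℝ (e i)).comp (H x) :=
    fun i x hx => (hg' i x hx).fderiv
  have hEval : ∀ i (v : E3), HasFDerivAt (fun y => fderiv ℝ (g i) y v)
      ((ContinuousLinearMap.apply ℝ ℝ v).comp (B i)) x₀ :=
    fun i v => (ContinuousLinearMap.apply ℝ ℝ v).hasFDerivAt.comp x₀ (hB' i)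
  have hEvalH : ∀ i (v : E3), HasFDerivAt (fun y => H y v (e i))
      ((ContinuousLinearMap.apply ℝ ℝ v).comp (B i)) x₀ := by
    intro i v
    apply (hEval i v).congr_of_eventuallyEq
    filter_upwards [hΩnhds] with y hy
    rw [hgH i y hy]; rfl
  have hcross : ∀ i j, B i (e j) (e j) = B j (e i) (e j) := by
    intro i j
    have h1 : HasFDerivAt (fun y => fderiv ℝ (g i) y (e j))
        ((ContinuousLinearMap.apply ℝ ℝ (e j)).comp (B i)) x₀ := hEval i (e j)
    have h2 : HasFDerivAt (fun y => fderiv ℝ (g i) y (e j))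
        ((ContinuousLinearMap.apply ℝ ℝ (e i)).comp (B j)) x₀ := by
      apply (hEval j (e i)).congr_of_eventuallyEq
      filter_upwards [hΩnhds] with y hy
      rw [hgH i y hy, hgH j y hy]
      exact (hsymH y hy (e i) (e j)).symm
    have := h1.unique h2
    calc B i (e j) (e j) = ((ContinuousLinearMap.apply ℝ ℝ (e j)).comp (B i)) (e j) := rfl
      _ = ((ContinuousLinearMap.apply ℝ ℝ (e i)).comp (B j)) (e j) := by rw [this]
      _ = B j (e j) (e i) := rfl
      _ = B j (e i) (e j) := hsymB j (e j) (e i)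
  have hlapeq : ∀ x ∈ Ω, lap γ x = ∑ j, fderiv ℝ (g j) x (e j) := by
    intro x hx
    rw [lap]
    refine Finset.sum_congr rfl fun j _ => ?_
    rw [hgH j x hx]; rfl
  have hlap' : HasFDerivAt (lap γ)
      (∑ j, (ContinuousLinearMap.apply ℝ ℝ (e j)).comp (B j)) x₀ := by
    have h1 : HasFDerivAt (fun y => ∑ j, fderiv ℝ (g j) y (e j))
        (∑ j, (ContinuousLinearMap.apply ℝ ℝ (e j)).comp (B j)) x₀ :=
      HasFDerivAt.fun_sum (fun j _ => hEval j (e j))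
    apply h1.congr_of_eventuallyEq
    filter_upwards [hΩnhds] with y hy
    exact hlapeq y hy
  set Dlap : E3 →L[ℝ] ℝ := ∑ j, (ContinuousLinearMap.apply ℝ ℝ (e j)).comp (B j) with hDlap
  have htrace : ∀ i, ∑ j, B i (e j) (e j) = Dlap (e i) := by
    intro i
    rw [hDlap, ContinuousLinearMap.sum_apply]
    refine Finset.sum_congr rfl fun j _ => ?_
    rw [hcross i j]; rfl
  -- squared gradient in coordinates
  set ps : E3 → ℝ := fun x => ∑ i, g i x * g i x with hps
  have hcoord : ∀ x ∈ Ω, ‖gradient γ x‖ ^ 2 = ps x := by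
    intro x hx
    have hfg : ∀ v, fderiv ℝ γ x v = inner ℝ (gradient γ x) v := by
      intro v
      rw [gradient, ← InnerProductSpace.toDual_apply_apply,
        (InnerProductSpace.toDual ℝ E3).apply_symm_apply]
    have h1 : ∀ i, g i x = gradient γ x i := by
      intro i
      rw [hg]
      simp only [hfg, he]
      rw [EuclideanSpace.inner_single_right]
      simp
    rw [← real_inner_self_eq_norm_sq]
    rw [hps]
    simp only [h1]
    rw [PiLp.inner_apply]
    simp [RCLike.inner_apply, pow_two]
  set Dpsi : E3 → E3 →L[ℝ] ℝ := fun x => ∑ i,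
      ((g i x) • ((ContinuousLinearMap.apply ℝ ℝ (e i)).comp (H x))
        + (g i x) • ((ContinuousLinearMap.apply ℝ ℝ (e i)).comp (H x))) with hDpsi
  have hps' : ∀ x ∈ Ω, HasFDerivAt ps (Dpsi x) x := by
    intro x hx
    exact HasFDerivAt.fun_sum (fun i _ => (hg' i x hx).mul (hg' i x hx))
  have hDpsiApply : ∀ x v, Dpsi x v = ∑ i, 2 * (g i x * H x v (e i)) := by
    intro x v
    rw [hDpsi]
    simp only [ContinuousLinearMap.sum_apply, ContinuousLinearMap.add_apply,
      ContinuousLinearMap.smul_apply, ContinuousLinearMap.comp_apply,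
      ContinuousLinearMap.apply_apply, smul_eq_mul]
    refine Finset.sum_congr rfl fun i _ => by ring
  -- local maximum facts
  have hmax0 : ∀ᶠ y in nhds x₀, ps y ≤ ps x₀ := by
    have h1 : ∀ᶠ y in nhds x₀, ‖gradient γ y‖ ^ 2 ≤ ‖gradient γ x₀‖ ^ 2 := by
      have h2 := hmax
      rw [IsLocalMaxOn, IsMaxFilter, nhdsWithin_eq_nhds.2 hΩnhds] at h2
      exact h2
    filter_upwards [h1, hΩnhds] with y h2 hy
    rw [← hcoord y hy, ← hcoord x₀ hx₀]
    exact h2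
  have hDpsi0 : Dpsi x₀ = 0 := by
    have h1 : IsLocalMax ps x₀ := hmax0
    rw [← (hps' x₀ hx₀).fderiv]
    exact h1.fderiv_eq_zero
  -- second-derivative inequality in each coordinate direction
  have hkey : ∀ j, ∑ i, 2 * (H x₀ (e j) (e i) * H x₀ (e j) (e i)
      + g i x₀ * B i (e j) (e j)) ≤ 0 := by
    intro j
    have hx0' : x₀ + (0:ℝ) • e j = x₀ := by simp
    have hline : ∀ t : ℝ, HasDerivAt (fun s : ℝ => x₀ + s • e j) (e j) t := by
      intro t
      simpa using ((hasDerivAt_id t).smul_const (e j)).const_add x₀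
    have hmemEv : ∀ᶠ t in nhds (0:ℝ), (x₀ + t • e j) ∈ Ω := by
      have hcont : Continuous fun t : ℝ => x₀ + t • e j := continuous_const.add (continuous_id.smul continuous_const)
      have htd : Tendsto (fun t : ℝ => x₀ + t • e j) (nhds 0) (nhds x₀) := by
        have := hcont.tendsto 0
        rwa [hx0'] at this
      exact htd.eventually_mem hΩnhds
    have hφ : ∀ᶠ t in nhds (0:ℝ),
        HasDerivAt (fun s : ℝ => ps (x₀ + s • e j)) ((fun s : ℝ => Dpsi (x₀ + s • e j) (e j)) t) t := by
      filter_upwards [hmemEv] with t ht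
      exact (hps' _ ht).comp_hasDerivAt t (hline t)
    have hh : HasDerivAt (fun s : ℝ => Dpsi (x₀ + s • e j) (e j))
        (∑ i, 2 * (H x₀ (e j) (e i) * H x₀ (e j) (e i) + g i x₀ * B i (e j) (e j))) 0 := by
      have hsum : HasDerivAt (fun s : ℝ => ∑ i, 2 * (g i (x₀ + s • e j) * H (x₀ + s • e j) (e j) (e i)))
          (∑ i, 2 * (H x₀ (e j) (e i) * H x₀ (e j) (e i) + g i x₀ * B i (e j) (e j))) 0 := by
        apply HasDerivAt.fun_sum
        intro i _
        have hu : HasDerivAt (fun s : ℝ => g i (x₀ + s • e j)) (H x₀ (e j) (e i)) 0 := by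
          have h0 : HasFDerivAt (g i) ((ContinuousLinearMap.apply ℝ ℝ (e i)).comp (H x₀))
              (x₀ + (0:ℝ) • e j) := by
            rw [hx0']; exact hg' i x₀ hx₀
          exact h0.comp_hasDerivAt 0 (hline 0)
        have hv : HasDerivAt (fun s : ℝ => H (x₀ + s • e j) (e j) (e i)) (B i (e j) (e j)) 0 := by
          have h0 : HasFDerivAt (fun y => H y (e j) (e i))
              ((ContinuousLinearMap.apply ℝ ℝ (e j)).comp (B i)) (x₀ + (0:ℝ) • e j) := by
            rw [hx0']; exact hEvalH i (e j)
          exact h0.comp_hasDerivAt 0 (hline 0)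
        have := (hu.mul hv).const_mul 2
        simpa [hx0'] using this
      have hfun : (fun s : ℝ => Dpsi (x₀ + s • e j) (e j))
          = fun s : ℝ => ∑ i, 2 * (g i (x₀ + s • e j) * H (x₀ + s • e j) (e j) (e i)) := by
        funext s
        exact hDpsiApply _ (e j)
      rw [hfun]
      exact hsum
    have h0 : Dpsi (x₀ + (0:ℝ) • e j) (e j) = 0 := by
      rw [hx0', hDpsi0]; rfl
    have hmaxφ : ∀ᶠ t in nhds (0:ℝ),
        ps (x₀ + t • e j) ≤ ps (x₀ + (0:ℝ) • e j) := by
      have htd : Tendsto (fun t : ℝ => x₀ + t • e j) (nhds 0) (nhds x₀) := by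
        have hcont : Continuous fun t : ℝ => x₀ + t • e j := continuous_const.add (continuous_id.smul continuous_const)
        have := hcont.tendsto 0
        rwa [hx0'] at this
      filter_upwards [htd.eventually hmax0] with t ht
      rw [hx0']
      exact ht
    exact second_deriv_test_aux hφ hh h0 hmaxφ
  -- hence the "Hessian" part is nonpositive in each direction
  have hBj : ∀ j, ∑ i, g i x₀ * B i (e j) (e j) ≤ 0 := by
    intro j
    have hsq : (0:ℝ) ≤ ∑ i, H x₀ (e j) (e i) * H x₀ (e j) (e i) :=
      Finset.sum_nonneg fun i _ => mul_self_nonneg _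
    have h1 := hkey j
    have h2 : ∑ i, 2 * (H x₀ (e j) (e i) * H x₀ (e j) (e i) + g i x₀ * B i (e j) (e j))
        = 2 * ((∑ i, H x₀ (e j) (e i) * H x₀ (e j) (e i)) + ∑ i, g i x₀ * B i (e j) (e j)) := by
      rw [← Finset.mul_sum, Finset.sum_add_distrib]
    rw [h2] at h1
    linarith
  have hS : ∑ i, g i x₀ * Dlap (e i) ≤ 0 := by
    have h1 : ∑ i, g i x₀ * Dlap (e i) = ∑ j, ∑ i, g i x₀ * B i (e j) (e j) := by
      rw [Finset.sum_comm]
      refine Finset.sum_congr rfl fun i _ => ?_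
      rw [← htrace i, Finset.mul_sum]
    rw [h1]
    exact Finset.sum_nonpos fun j _ => hBj j
  -- differentiate the PDE identity at x₀
  have hγ0 : 0 < γ x₀ := hpos x₀ hx₀
  have hrpow' : HasFDerivAt (fun y => γ y ^ σ) ((σ * γ x₀ ^ (σ - 1)) • fderiv ℝ γ x₀) x₀ :=
    (hd1 x₀ hx₀).hasFDerivAt.rpow_const (Or.inl (ne_of_gt hγ0))
  have hΦ : HasFDerivAt (fun x => a * ps x + b * (γ x * lap γ x) - γ x ^ σ)
      (a • Dpsi x₀ + b • (γ x₀ • Dlap + lap γ x₀ • fderiv ℝ γ x₀)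
        - (σ * γ x₀ ^ (σ - 1)) • fderiv ℝ γ x₀) x₀ := by
    exact HasFDerivAt.sub
      (HasFDerivAt.add ((hps' x₀ hx₀).const_mul a)
        (((hd1 x₀ hx₀).hasFDerivAt.mul hlap').const_mul b)) hrpow'
  have hΦ0 : HasFDerivAt (fun x => a * ps x + b * (γ x * lap γ x) - γ x ^ σ)
      (0 : E3 →L[ℝ] ℝ) x₀ := by
    apply (hasFDerivAt_const (0:ℝ) x₀).congr_of_eventuallyEq
    filter_upwards [hΩnhds] with y hy
    have := hid y hy
    rw [hcoord y hy] at this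
    have : a * ps y + b * (γ y * lap γ y) = γ y ^ σ := by rw [← this]; ring
    rw [this]; ring
  have hD0 := hΦ.unique hΦ0
  have hIdDiff : ∀ i, b * (γ x₀ * Dlap (e i) + lap γ x₀ * g i x₀)
      = σ * γ x₀ ^ (σ - 1) * g i x₀ := by
    intro i
    have h1 := congrArg (fun (L : E3 →L[ℝ] ℝ) => L (e i)) hD0
    simp only [ContinuousLinearMap.sub_apply, ContinuousLinearMap.add_apply,
      ContinuousLinearMap.smul_apply, ContinuousLinearMap.zero_apply, smul_eq_mul,
      hDpsi0] at h1
    have h2 : fderiv ℝ γ x₀ (e i) = g i x₀ := rfl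
    rw [h2] at h1
    linarith [h1]
  -- combine
  have hP0 : (0:ℝ) ≤ ps x₀ := Finset.sum_nonneg fun i _ => mul_self_nonneg _
  have hkey2 : b * γ x₀ * (∑ i, g i x₀ * Dlap (e i)) + b * lap γ x₀ * ps x₀
      = σ * γ x₀ ^ (σ - 1) * ps x₀ := by
    have h1 : ∀ i ∈ Finset.univ, b * γ x₀ * (g i x₀ * Dlap (e i))
        + b * lap γ x₀ * (g i x₀ * g i x₀) = σ * γ x₀ ^ (σ - 1) * (g i x₀ * g i x₀) := by
      intro i _
      have h2 := hIdDiff i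
      linear_combination g i x₀ * h2
    calc b * γ x₀ * (∑ i, g i x₀ * Dlap (e i)) + b * lap γ x₀ * ps x₀
        = ∑ i, (b * γ x₀ * (g i x₀ * Dlap (e i)) + b * lap γ x₀ * (g i x₀ * g i x₀)) := by
          rw [hps, Finset.mul_sum, Finset.mul_sum, Finset.sum_add_distrib]
      _ = ∑ i, σ * γ x₀ ^ (σ - 1) * (g i x₀ * g i x₀) := Finset.sum_congr rfl h1
      _ = σ * γ x₀ ^ (σ - 1) * ps x₀ := by rw [hps, Finset.mul_sum]
  have hlapP : 0 ≤ b * lap γ x₀ * ps x₀ := by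
    have h1 : 0 ≤ σ * γ x₀ ^ (σ - 1) * ps x₀ := by
      have := Real.rpow_pos_of_pos hγ0 (σ - 1)
      positivity
    have hprod : b * γ x₀ * (∑ i, g i x₀ * Dlap (e i)) ≤ 0 :=
      mul_nonpos_of_nonneg_of_nonpos (mul_nonneg hb.le hγ0.le) hS
    linarith [hkey2, h1, hprod]
  rcases eq_or_lt_of_le hP0 with hP | hP
  · have h9 : ‖gradient γ x₀‖ ^ 2 = 0 := by rw [hcoord x₀ hx₀, ← hP]
    rw [h9, mul_zero]
    exact (Real.rpow_pos_of_pos hγ0 σ).le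
  · have hlap0 : 0 ≤ lap γ x₀ := by
      by_contra hneg
      push_neg at hneg
      nlinarith [hlapP, mul_pos hb hP]
    have hidx := hid x₀ hx₀
    have hnn : 0 ≤ b * γ x₀ * lap γ x₀ := mul_nonneg (mul_nonneg hb.le hγ0.le) hlap0
    linarith [hidx, hnn]
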